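/- Let ι be a finite index set, for each i ∈ ι let X_i ⊆ ℝ be nonempty, convex, and compact, and let X = Π_{i∈ι} X_i. Let u_i : (ι → ℝ) → ℝ be utilities and Φ : (ι → ℝ) → ℝ a continuous function, differentiable on X, that is strictly concave on X and satisfies the exact potential identity with respect to (u_i). Then the stage game has a unique pure Nash equilibrium p*, and p* is the unique maximizer of Φ over X. -/

import Mathlib

open Set Filter Topology

lemma slope_tendsto_aux {ι : Type*} [Fintype ι]
    (X : Set (ι → ℝ)) (Φ : (ι → ℝ) → ℝ) (p : ι → ℝ) (f : (ι → ℝ) →L[ℝ] ℝ)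
    (hf : HasFDerivWithinAt Φ f X p) (w : ι → ℝ)
    (h : ∀ t ∈ Set.Icc (0:ℝ) 1, p + t • w ∈ X) :
    Tendsto (fun t : ℝ => (Φ (p + t • w) - Φ p) / t) (𝓝[>] (0:ℝ)) (𝓝 (f w)) := by
  set γ : ℝ → (ι → ℝ) := fun t => p + t • w with hγ
  have hγ0 : γ 0 = p := by simp [hγ]
  have hd : HasDerivWithinAt γ w (Set.Icc 0 1) 0 := by
    have : HasDerivAt γ w 0 := by
      simpa [hγ] using ((hasDerivAt_id (0:ℝ)).smul_const w).const_add p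
    exact this.hasDerivWithinAt
  have hmaps : Set.MapsTo γ (Set.Icc 0 1) X := fun t ht => h t ht
  have hcomp : HasDerivWithinAt (Φ ∘ γ) (f w) (Set.Icc 0 1) 0 :=
    hf.comp_hasDerivWithinAt_of_eq (0:ℝ) hd hmaps hγ0.symm
  have hsl : Tendsto (slope (Φ ∘ γ) 0) (𝓝[Set.Icc 0 1 \ {0}] (0:ℝ)) (𝓝 (f w)) :=
    hasDerivWithinAt_iff_tendsto_slope.mp hcomp
  have hle : 𝓝[>] (0:ℝ) ≤ 𝓝[Set.Icc 0 1 \ {0}] (0:ℝ) := by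
    rw [← nhdsWithin_Ioc_eq_nhdsGT (zero_lt_one)]
    exact nhdsWithin_mono _ (fun t ht => ⟨⟨le_of_lt ht.1, ht.2⟩, ne_of_gt ht.1⟩)
  have := hsl.mono_left hle
  refine this.congr' ?_
  filter_upwards [self_mem_nhdsWithin] with t ht
  simp [slope, hγ0, hγ, div_eq_inv_mul]

lemma coordwise_max {ι : Type*} [Fintype ι] [DecidableEq ι]
    (Xi : ι → Set ℝ) (hconv : ∀ i, Convex ℝ (Xi i))
    (X : Set (ι → ℝ)) (hX : X = {p | ∀ i, p i ∈ Xi i})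
    (Φ : (ι → ℝ) → ℝ) (hdiff : DifferentiableOn ℝ Φ X)
    (hconc : ConcaveOn ℝ X Φ)
    (p : ι → ℝ) (hp : p ∈ X)
    (hNE : ∀ i, ∀ q ∈ Xi i, Φ (Function.update p i q) ≤ Φ p) :
    ∀ q ∈ X, Φ q ≤ Φ p := by
  intro q hq
  have hpX : ∀ i, p i ∈ Xi i := by rw [hX] at hp; exact hp
  have hqX : ∀ i, q i ∈ Xi i := by rw [hX] at hq; exact hq
  set f := fderivWithin ℝ Φ X p with hfdef
  have hf : HasFDerivWithinAt Φ f X p := (hdiff p hp).hasFDerivWithinAt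
  -- per-coordinate directions
  set w : ι → (ι → ℝ) := fun i => (q i - p i) • ((Pi.single i (1:ℝ) : ι → ℝ)) with hwdef
  have hpath : ∀ i, ∀ t ∈ Set.Icc (0:ℝ) 1,
      p + t • w i = Function.update p i ((1-t) * p i + t * q i) := by
    intro i t _
    funext j
    by_cases hji : j = i
    · subst hji; simp [hwdef, Function.update]; ring
    · simp [hwdef, Function.update, hji, Pi.single_apply]
  have hmem : ∀ i, ∀ t ∈ Set.Icc (0:ℝ) 1, ((1-t) * p i + t * q i) ∈ Xi i := by
    intro i t ht
    exact hconv i (hpX i) (hqX i) (by linarith [ht.2]) ht.1 (by ring)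
  have hmemX : ∀ i, ∀ t ∈ Set.Icc (0:ℝ) 1, p + t • w i ∈ X := by
    intro i t ht
    rw [hpath i t ht, hX]
    intro j
    by_cases hji : j = i
    · subst hji; simpa using hmem j t ht
    · simpa [Function.update, hji] using hpX j
  -- each directional derivative ≤ 0
  have hneg : ∀ i, f (w i) ≤ 0 := by
    intro i
    have htend := slope_tendsto_aux X Φ p f hf (w i) (hmemX i)
    refine le_of_tendsto htend ?_
    filter_upwards [Ioc_mem_nhdsGT_of_mem (Set.left_mem_Ico.mpr zero_lt_one)] with t ht
    have h1 : Φ (p + t • w i) ≤ Φ p := by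
      rw [hpath i t ⟨le_of_lt ht.1, ht.2⟩]
      exact hNE i _ (hmem i t ⟨le_of_lt ht.1, ht.2⟩)
    exact div_nonpos_of_nonpos_of_nonneg (by linarith) (le_of_lt ht.1)
  -- decompose q - p
  have hdecomp : q - p = ∑ i, w i := by
    funext j
    simp [hwdef, Finset.sum_apply, Pi.single_apply]
  have hfv : f (q - p) ≤ 0 := by
    rw [hdecomp, map_sum]
    exact Finset.sum_nonpos (fun i _ => hneg i)
  -- concavity: Φ q - Φ p ≤ f (q - p)
  have htend := slope_tendsto_aux X Φ p f hf (q - p) (by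
    intro t ht
    have : p + t • (q - p) = (1 - t) • p + t • q := by module
    rw [this, hX]
    intro j
    exact hconv j (hpX j) (hqX j) (by linarith [ht.2]) ht.1 (by ring))
  have hge : Φ q - Φ p ≤ f (q - p) := by
    refine ge_of_tendsto htend ?_
    filter_upwards [Ioc_mem_nhdsGT_of_mem (Set.left_mem_Ico.mpr zero_lt_one)] with t ht
    have ha : (0:ℝ) ≤ 1 - t := by linarith [ht.2]
    have hcc := hconc.2 hp hq ha (le_of_lt ht.1) (by ring : (1 - t) + t = 1)
    have heq : p + t • (q - p) = (1 - t) • p + t • q := by module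
    rw [le_div_iff₀ ht.1, heq]
    have : (1-t) • Φ p + t • Φ q = Φ p + t * (Φ q - Φ p) := by simp [smul_eq_mul]; ring
    linarith [this ▸ hcc]
  linarith

theorem stmt_8 {ι : Type*} [Fintype ι] [DecidableEq ι]
    (Xi : ι → Set ℝ) (hne : ∀ i, (Xi i).Nonempty)
    (hconv : ∀ i, Convex ℝ (Xi i)) (hcpt : ∀ i, IsCompact (Xi i))
    (X : Set (ι → ℝ)) (hX : X = {p | ∀ i, p i ∈ Xi i})
    (u : ι → (ι → ℝ) → ℝ) (Φ : (ι → ℝ) → ℝ)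
    (hcont : ContinuousOn Φ X) (hdiff : DifferentiableOn ℝ Φ X)
    (hsc : StrictConcaveOn ℝ X Φ)
    (hpot : ∀ i, ∀ p ∈ X, ∀ q ∈ Xi i,
      Φ (Function.update p i q) - Φ p = u i (Function.update p i q) - u i p) :
    ∃ pstar ∈ X,
      (∀ i, ∀ q ∈ Xi i, u i (Function.update pstar i q) ≤ u i pstar) ∧
      (∀ q ∈ X, Φ q ≤ Φ pstar) ∧
      (∀ p ∈ X, (∀ i, ∀ q ∈ Xi i, u i (Function.update p i q) ≤ u i p) → p = pstar) ∧
      (∀ p ∈ X, (∀ q ∈ X, Φ q ≤ Φ p) → p = pstar) := by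
  -- X is compact and nonempty
  have hXpi : X = Set.pi Set.univ Xi := by
    rw [hX]; ext p; simp [Set.mem_pi]
  have hXcpt : IsCompact X := by
    rw [hXpi]; exact isCompact_univ_pi hcpt
  have hXne : X.Nonempty := by
    rw [hXpi]
    exact Set.univ_pi_nonempty_iff.mpr (fun i => hne i)
  obtain ⟨pstar, hpstar, hmax⟩ := hXcpt.exists_isMaxOn hXne hcont
  have hmax' : ∀ q ∈ X, Φ q ≤ Φ pstar := fun q hq => hmax hq
  -- updates stay in X
  have hupd : ∀ p ∈ X, ∀ i, ∀ q ∈ Xi i, Function.update p i q ∈ X := by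
    intro p hp i q hq
    rw [hX] at hp ⊢
    intro j
    by_cases hji : j = i
    · subst hji; simpa using hq
    · simpa [Function.update, hji] using hp j
  -- uniqueness of maximizer
  have huniq : ∀ p ∈ X, (∀ q ∈ X, Φ q ≤ Φ p) → p = pstar := by
    intro p hp hpmax
    by_contra hne'
    have h2 := hsc.2 hp hpstar hne' (by norm_num : (0:ℝ) < 1/2) (by norm_num : (0:ℝ) < 1/2)
      (by norm_num)
    set m := (1/2 : ℝ) • p + (1/2 : ℝ) • pstar with hm
    have hmX : m ∈ X := hsc.1 hp hpstar (by norm_num) (by norm_num) (by norm_num)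
    have h3 : Φ m ≤ Φ pstar := hmax' m hmX
    have h4 : Φ pstar ≤ Φ p := hpmax pstar hpstar
    have h5 : Φ p ≤ Φ pstar := hmax' p hp
    have : Φ p = Φ pstar := le_antisymm h5 h4
    rw [this] at h2
    simp [smul_eq_mul] at h2
    linarith
  refine ⟨pstar, hpstar, ?_, hmax', ?_, huniq⟩
  · intro i q hq
    have h1 := hpot i pstar hpstar q hq
    have h2 : Φ (Function.update pstar i q) ≤ Φ pstar :=
      hmax' _ (hupd pstar hpstar i q hq)
    linarith
  · intro p hp hNEu
    have hNE : ∀ i, ∀ q ∈ Xi i, Φ (Function.update p i q) ≤ Φ p := by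
      intro i q hq
      have := hpot i p hp q hq
      have := hNEu i q hq
      linarith
    have := coordwise_max Xi hconv X hX Φ hdiff hsc.concaveOn p hp hNE
    exact huniq p hp this
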